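/- Let D_q act on x. Then D_q^n applied to the function x ↦ ₁Φ₁(a; 0; q, bx) := ∑_{m=0}^∞ (-1)^m q^{\binom{m}{2}} (a;q)_m (bx)^m / (q;q)_m equals (-1)^n b^n (a;q)_n q^{\binom{n}{2}} ₁Φ₁(aq^n; 0; q, bxq^n). -/

import Mathlib

open Finset

noncomputable def qPoch (q a : ℂ) (n : ℕ) : ℂ := ∏ j ∈ Finset.range n, (1 - a * q ^ j)

noncomputable def qPochInf (q a : ℂ) : ℂ := ∏' j : ℕ, (1 - a * q ^ j)

noncomputable def cauchyP (q x y : ℂ) (n : ℕ) : ℂ := ∏ j ∈ Finset.range n, (x - q ^ j * y)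

noncomputable def qBinom (q : ℂ) (n k : ℕ) : ℂ := qPoch q q n / (qPoch q q k * qPoch q q (n - k))

noncomputable def qDeriv (q : ℂ) (f : ℂ → ℂ) : ℂ → ℂ := fun x => (f x - f (q * x)) / x

noncomputable def qTheta (q : ℂ) (f : ℂ → ℂ → ℂ) : ℂ → ℂ → ℂ :=
  fun x y => (f (q⁻¹ * x) y - f x (q * y)) / (q⁻¹ * x - y)

/-- `₁Φ₁(a; 0; q, z)` -/
noncomputable def phi11 (q a z : ℂ) : ℂ :=
  ∑' m : ℕ, (-1) ^ m * q ^ m.choose 2 * qPoch q a m * z ^ m / qPoch q q m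

/-- generalized Cauchy polynomials `p_n(x,y,a)` -/
noncomputable def genCauchy (q a x y : ℂ) (n : ℕ) : ℂ :=
  ∑ k ∈ Finset.range (n + 1),
    qBinom q n k * (-1) ^ k * q ^ k.choose 2 * qPoch q a k * x ^ (n - k) * y ^ k

/-- generalized Hahn polynomials `h_n(x,y,a,b|q)` -/
noncomputable def hahn (q x y a b : ℂ) (n : ℕ) : ℂ :=
  ∑ k ∈ Finset.range (n + 1),
    qBinom q n k * (-1) ^ k * q ^ k.choose 2 * b ^ k * qPoch q a k * cauchyP q y x (n - k)

lemma qPoch_ne_zero (q : ℝ) (hq0 : 0 < q) (hq1 : q < 1) (m : ℕ) :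
    qPoch (q:ℂ) (q:ℂ) m ≠ 0 := by
  unfold qPoch
  apply Finset.prod_ne_zero_iff.mpr
  intro j _
  have h : (1 : ℂ) - (q:ℂ) * (q:ℂ) ^ j = ((1 - q * q ^ j : ℝ) : ℂ) := by push_cast; ring
  rw [h]
  have hpos : (0:ℝ) < 1 - q * q ^ j := by
    have : q * q ^ j < 1 := by
      calc q * q ^ j ≤ q * 1 := by
            apply mul_le_mul_of_nonneg_left _ hq0.le
            exact pow_le_one₀ hq0.le hq1.le
        _ = q := mul_one q
        _ < 1 := hq1
    linarith
  exact_mod_cast hpos.ne'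

lemma qPoch_q_norm_ge (q : ℝ) (hq0 : 0 < q) (hq1 : q < 1) (m : ℕ) :
    (1 - q) ^ m ≤ ‖qPoch (q:ℂ) (q:ℂ) m‖ := by
  have hcast : qPoch (q:ℂ) (q:ℂ) m = ((∏ j ∈ Finset.range m, (1 - q * q ^ j) : ℝ) : ℂ) := by
    unfold qPoch; push_cast; ring_nf
  rw [hcast, Complex.norm_real]
  have hfac : ∀ j ∈ Finset.range m, (0:ℝ) ≤ 1 - q * q ^ j ∧ 1 - q ≤ 1 - q * q ^ j := by
    intro j _
    have h1 : q * q ^ j ≤ q := by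
      calc q * q ^ j ≤ q * 1 := mul_le_mul_of_nonneg_left (pow_le_one₀ hq0.le hq1.le) hq0.le
        _ = q := mul_one q
    constructor <;> nlinarith
  calc (1-q)^m = ∏ j ∈ Finset.range m, (1-q) := by rw [Finset.prod_const, Finset.card_range]
    _ ≤ ∏ j ∈ Finset.range m, (1 - q * q ^ j) := by
        apply Finset.prod_le_prod
        · intro j _; linarith
        · intro j hj; exact (hfac j hj).2
    _ ≤ |∏ j ∈ Finset.range m, (1 - q * q ^ j)| := le_abs_self _
    _ = ‖∏ j ∈ Finset.range m, (1 - q * q ^ j)‖ := rfl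

lemma qPoch_norm_le (q : ℝ) (hq0 : 0 < q) (hq1 : q < 1) (A : ℂ) (m : ℕ) :
    ‖qPoch (q:ℂ) A m‖ ≤ (1 + ‖A‖) ^ m := by
  unfold qPoch
  calc ‖∏ j ∈ Finset.range m, (1 - A * (q:ℂ) ^ j)‖
      ≤ ∏ j ∈ Finset.range m, ‖(1 - A * (q:ℂ) ^ j)‖ := norm_prod_le _ _
    _ ≤ ∏ j ∈ Finset.range m, (1 + ‖A‖) := by
        apply Finset.prod_le_prod
        · intro j _; exact norm_nonneg _
        · intro j _
          calc ‖(1:ℂ) - A * (q:ℂ)^j‖ ≤ ‖(1:ℂ)‖ + ‖A * (q:ℂ)^j‖ := norm_sub_le _ _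
            _ = 1 + ‖A‖ * q ^ j := by
                rw [norm_one, norm_mul, norm_pow, Complex.norm_real]
                rw [Real.norm_of_nonneg hq0.le]
            _ ≤ 1 + ‖A‖ * 1 := by
                have := pow_le_one₀ hq0.le hq1.le (n := j)
                nlinarith [norm_nonneg A]
            _ = 1 + ‖A‖ := by ring
    _ = (1 + ‖A‖) ^ m := by rw [Finset.prod_const, Finset.card_range]

lemma summable_phi11 (q : ℝ) (hq0 : 0 < q) (hq1 : q < 1) (A z : ℂ) :
    Summable (fun m : ℕ =>
      (-1) ^ m * (q:ℂ) ^ m.choose 2 * qPoch (q:ℂ) A m * z ^ m / qPoch (q:ℂ) (q:ℂ) m) := by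
  set K : ℝ := (1 + ‖A‖) * (‖z‖ + 1) / (1 - q) with hK
  have hKpos : 0 < K := by
    apply div_pos
    · positivity
    · linarith
  have hg : Summable (fun m : ℕ => q ^ m.choose 2 * K ^ m) := by
    apply summable_of_ratio_test_tendsto_lt_one (l := 0) one_pos
    · filter_upwards with m
      positivity
    · have : (fun m : ℕ => ‖q ^ (m+1).choose 2 * K ^ (m+1)‖ / ‖q ^ m.choose 2 * K ^ m‖)
          = fun m : ℕ => q ^ m * K := by
        funext m
        have h2 : (m+1).choose 2 = m.choose 2 + m := by
          rw [Nat.choose_succ_succ]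
          simp [Nat.choose_one_right, Nat.add_comm]
        rw [h2]
        rw [Real.norm_of_nonneg (by positivity), Real.norm_of_nonneg (by positivity)]
        rw [pow_add, pow_succ]
        field_simp
      rw [this]
      have := (tendsto_pow_atTop_nhds_zero_of_lt_one hq0.le hq1).mul_const K
      simpa using this
  apply Summable.of_norm
  apply hg.of_nonneg_of_le (fun m => norm_nonneg _)
  intro m
  rw [norm_div, norm_mul, norm_mul, norm_mul, norm_pow, norm_pow, norm_pow]
  simp only [norm_neg, norm_one, one_pow, one_mul, Complex.norm_real]
  rw [Real.norm_of_nonneg hq0.le]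
  have hden := qPoch_q_norm_ge q hq0 hq1 m
  have hdenpos : (0:ℝ) < (1-q)^m := pow_pos (by linarith) m
  have hnum : q ^ m.choose 2 * ‖qPoch (q:ℂ) A m‖ * ‖z‖ ^ m
      ≤ q ^ m.choose 2 * ((1 + ‖A‖) * (‖z‖ + 1)) ^ m := by
    rw [mul_pow]
    have h1 := qPoch_norm_le q hq0 hq1 A m
    have h2 : ‖z‖ ^ m ≤ (‖z‖ + 1) ^ m := by
      apply pow_le_pow_left₀ (norm_nonneg _); linarith
    have hq2 : (0:ℝ) ≤ q ^ m.choose 2 := by positivity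
    calc q ^ m.choose 2 * ‖qPoch (q:ℂ) A m‖ * ‖z‖ ^ m
        ≤ q ^ m.choose 2 * ((1+‖A‖)^m * (‖z‖+1)^m) := by
          rw [mul_assoc]
          apply mul_le_mul_of_nonneg_left _ hq2
          apply mul_le_mul h1 h2 (by positivity) (by positivity)
      _ = q ^ m.choose 2 * ((1+‖A‖)^m * (‖z‖+1)^m) := rfl
  calc q ^ m.choose 2 * ‖qPoch (q:ℂ) A m‖ * ‖z‖ ^ m / ‖qPoch (q:ℂ) (q:ℂ) m‖
      ≤ q ^ m.choose 2 * ((1+‖A‖) * (‖z‖+1)) ^ m / (1-q)^m := by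
        apply div_le_div₀ (by positivity) hnum hdenpos hden
    _ = q ^ m.choose 2 * K ^ m := by
        rw [hK, div_pow, mul_div_assoc]

lemma qPoch_succ (q a : ℂ) (m : ℕ) :
    qPoch q a (m+1) = qPoch q a m * (1 - a * q ^ m) := Finset.prod_range_succ _ _

lemma qPoch_succ' (q a : ℂ) (m : ℕ) :
    qPoch q a (m+1) = (1 - a) * qPoch q (a*q) m := by
  unfold qPoch
  rw [Finset.prod_range_succ']
  rw [mul_comm]
  congr 1
  · simp
  · apply Finset.prod_congr rfl
    intro j _
    ring

lemma one_sub_qpow_ne (q : ℝ) (hq0 : 0 < q) (hq1 : q < 1) (m : ℕ) :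
    (1:ℂ) - (q:ℂ) ^ (m+1) ≠ 0 := by
  intro h
  have hc : ((1 - q ^ (m+1) : ℝ) : ℂ) = 0 := by push_cast; linear_combination h
  have h2 : (1 - q ^ (m+1) : ℝ) = 0 := by exact_mod_cast hc
  have h3 : q ^ (m+1) < 1 := pow_lt_one₀ hq0.le hq1 (Nat.succ_ne_zero m)
  linarith

lemma step (q : ℝ) (hq0 : 0 < q) (hq1 : q < 1) (A B x : ℂ) (hx : x ≠ 0) :
    (phi11 (q:ℂ) A (B*x) - phi11 (q:ℂ) A (B*((q:ℂ)*x))) / x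
      = -(B*(1-A)) * phi11 (q:ℂ) (A*(q:ℂ)) (B*(q:ℂ)*x) := by
  have ht := summable_phi11 q hq0 hq1 A (B*x)
  have hs := summable_phi11 q hq0 hq1 A (B*((q:ℂ)*x))
  have hu := summable_phi11 q hq0 hq1 (A*(q:ℂ)) (B*(q:ℂ)*x)
  unfold phi11
  rw [← Summable.tsum_sub ht hs]
  set h : ℕ → ℂ := fun m =>
    (-1) ^ m * (q:ℂ) ^ m.choose 2 * qPoch (q:ℂ) A m * (B*x) ^ m / qPoch (q:ℂ) (q:ℂ) m -
    (-1) ^ m * (q:ℂ) ^ m.choose 2 * qPoch (q:ℂ) A m * (B*((q:ℂ)*x)) ^ m / qPoch (q:ℂ) (q:ℂ) m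
    with hh
  have hsum : Summable h := ht.sub hs
  rw [Summable.tsum_eq_zero_add hsum]
  have h0 : h 0 = 0 := by simp [hh, qPoch]
  rw [h0, zero_add]
  have hterm : ∀ m : ℕ, h (m+1) = (-(B*(1-A))*x) *
      ((-1) ^ m * (q:ℂ) ^ m.choose 2 * qPoch (q:ℂ) (A*(q:ℂ)) m * (B*(q:ℂ)*x) ^ m
        / qPoch (q:ℂ) (q:ℂ) m) := by
    intro m
    have hch : (m+1).choose 2 = m.choose 2 + m := by
      rw [Nat.choose_succ_succ]
      simp [Nat.choose_one_right, Nat.add_comm]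
    have hne1 : (1:ℂ) - (q:ℂ) * (q:ℂ) ^ m ≠ 0 := by
      have := one_sub_qpow_ne q hq0 hq1 m
      rw [pow_succ] at this
      intro hcon; apply this; linear_combination hcon
    have hpne := qPoch_ne_zero q hq0 hq1 m
    simp only [hh]
    rw [qPoch_succ' (q:ℂ) A m, qPoch_succ (q:ℂ) (q:ℂ) m, hch]
    field_simp
    ring
  rw [tsum_congr hterm, tsum_mul_left]
  field_simp

theorem stmt9 (q : ℝ) (hq0 : 0 < q) (hq1 : q < 1) (a b : ℂ) (n : ℕ) (x : ℂ) (hx : x ≠ 0) :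
    (qDeriv (q : ℂ))^[n] (fun z => phi11 (q : ℂ) a (b * z)) x =
      (-1) ^ n * b ^ n * qPoch (q : ℂ) a n * (q : ℂ) ^ n.choose 2 *
        phi11 (q : ℂ) (a * (q : ℂ) ^ n) (b * x * (q : ℂ) ^ n) := by
  induction n generalizing x with
  | zero => simp [qPoch]
  | succ n ih =>
    rw [Function.iterate_succ_apply']
    have hqne : (q:ℂ) ≠ 0 := by exact_mod_cast hq0.ne'
    have ih1 := ih x hx
    have ih2 := ih ((q:ℂ)*x) (mul_ne_zero hqne hx)
    simp only [qDeriv]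
    rw [ih1, ih2]
    set c : ℂ := (-1)^n * b^n * qPoch (q:ℂ) a n * (q:ℂ)^n.choose 2 with hc
    have e1 : b*x*(q:ℂ)^n = (b*(q:ℂ)^n)*x := by ring
    have e2 : b*((q:ℂ)*x)*(q:ℂ)^n = (b*(q:ℂ)^n)*((q:ℂ)*x) := by ring
    rw [e1, e2, ← mul_sub, mul_div_assoc, step q hq0 hq1 (a*(q:ℂ)^n) (b*(q:ℂ)^n) x hx]
    have e3 : a*(q:ℂ)^n*(q:ℂ) = a*(q:ℂ)^(n+1) := by ring
    have e4 : b*(q:ℂ)^n*(q:ℂ)*x = b*x*(q:ℂ)^(n+1) := by ring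
    rw [e3, e4]
    have hch : (n+1).choose 2 = n.choose 2 + n := by
      rw [Nat.choose_succ_succ]
      simp [Nat.choose_one_right, Nat.add_comm]
    rw [hch, qPoch_succ, pow_add, hc]
    ring
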